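/- arXiv:2512.12077 — 2 statements merged into one kernel-verified Lean document; each statement's English description precedes it below -/
import Mathlib

section
/- The number of binary shuffle squares of semi-length n is at least binom(2n, n), i.e., |S_2(n)| ≥ binom(2n, n). -/
/-- The subword of `s` indexed by the positions where `c` is `true`,
in increasing order of index. -/
def subAt {α : Type*} (s : List α) (c : ℕ → Bool) : List α :=
  (s.zipIdx.filter (fun p => c p.2)).map Prod.fst

/-- `w` is a buffer for `s`: there is a partition `(A₁, A₂)` of the index set of `s`
(given by the indicator `c` of `A₁`) with `s(A₁) = s(A₂) ∘ w`. -/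
def IsBufferOf {α : Type*} (w s : List α) : Prop :=
  ∃ c : ℕ → Bool, subAt s c = subAt s (fun i => !(c i)) ++ w

/-- `bufferSet s t` is the set `B_t(s)` of buffers of the prefix `s[1,t]`. -/
def bufferSet {α : Type*} (s : List α) (t : ℕ) : Set (List α) :=
  {w | IsBufferOf w (s.take t)}

/-- A shuffle square: a word that can be partitioned into two disjoint identical subwords. -/
def IsShuffleSquare {α : Type*} (s : List α) : Prop := IsBufferOf [] s

/- ### Auxiliary development -/

lemma subAt_nil {α : Type*} (c : ℕ → Bool) : subAt ([] : List α) c = [] := rfl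

lemma subAt_cons {α : Type*} (x : α) (s : List α) (c : ℕ → Bool) :
    subAt (x :: s) c = (if c 0 then [x] else []) ++ subAt s (fun i => c (i + 1)) := by
  have key : ∀ (s : List α) (m : ℕ) (c : ℕ → Bool),
      ((List.zipIdx s (m+1)).filter (fun p => c p.2)).map Prod.fst
      = ((List.zipIdx s m).filter (fun p => c (p.2 + 1))).map Prod.fst := by
    intro s
    induction s with
    | nil => intro m c; simp
    | cons y s ih =>
      intro m c
      simp only [List.zipIdx_cons, List.filter_cons]
      by_cases h : c (m + 1) = true
      · simp only [h, if_pos]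
        simp only [List.map_cons]
        rw [ih]
      · simp only [h]
        simp only [Bool.false_eq_true, if_false]
        rw [ih]
  show ((List.zipIdx (x :: s) 0).filter (fun p => c p.2)).map Prod.fst = _
  rw [List.zipIdx_cons, List.filter_cons]
  by_cases h : c 0 = true
  · simp only [h, if_pos, List.map_cons]
    rw [key]
    rfl
  · simp only [h, Bool.false_eq_true, if_false]
    rw [key]
    rfl

/-- `Ilv s u v` : `s` is an interleaving (shuffle) of `u` and `v`. -/
inductive Ilv {α : Type*} : List α → List α → List α → Prop
  | nil : Ilv [] [] []
  | left {s u v : List α} (a : α) : Ilv s u v → Ilv (a :: s) (a :: u) v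
  | right {s u v : List α} (a : α) : Ilv s u v → Ilv (a :: s) u (a :: v)

lemma Ilv.subAt_exists {α : Type*} {s u v : List α} (h : Ilv s u v) :
    ∃ c : ℕ → Bool, subAt s c = u ∧ subAt s (fun i => !(c i)) = v := by
  induction h with
  | nil => exact ⟨fun _ => true, rfl, rfl⟩
  | left a _ ih =>
    obtain ⟨c, hc1, hc2⟩ := ih
    refine ⟨fun i => match i with | 0 => true | (i+1) => c i, ?_, ?_⟩
    · rw [subAt_cons]; simpa using hc1
    · rw [subAt_cons]; simpa using hc2
  | right a _ ih =>
    obtain ⟨c, hc1, hc2⟩ := ih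
    refine ⟨fun i => match i with | 0 => false | (i+1) => c i, ?_, ?_⟩
    · rw [subAt_cons]; simpa using hc1
    · rw [subAt_cons]; simpa using hc2

lemma isShuffleSquare_of_ilv {α : Type*} {s u : List α} (h : Ilv s u u) :
    IsShuffleSquare s := by
  obtain ⟨c, hc1, hc2⟩ := h.subAt_exists
  exact ⟨c, by rw [hc1, hc2, List.append_nil]⟩

/-- The queue-encoding: reading the pattern word `w`, maintain a FIFO queue `q` of
pending letters belonging to the current surplus side `σ`. -/
def encodeAux : Bool → List Bool → List Bool → List Bool
  | _, _, [] => []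
  | _, [], b :: w => b :: encodeAux b [b] w
  | σ, h :: t, b :: w =>
    if b = σ then (!h) :: encodeAux σ (h :: (t ++ [!h])) w
    else h :: encodeAux σ t w

/-- Decoder for `encodeAux`. -/
def decodeAux : Bool → List Bool → List Bool → List Bool
  | _, _, [] => []
  | _, [], x :: s => x :: decodeAux x [x] s
  | σ, h :: t, x :: s =>
    if x = h then (!σ) :: decodeAux σ t s
    else σ :: decodeAux σ (h :: (t ++ [x])) s

lemma decode_encode : ∀ (w : List Bool) (σ : Bool) (q : List Bool),
    decodeAux σ q (encodeAux σ q w) = w := by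
  intro w
  induction w with
  | nil => intro σ q; cases q <;> rfl
  | cons b w ih =>
    intro σ q
    match q with
    | [] => simp only [encodeAux, decodeAux, ih]
    | h :: t =>
      by_cases hb : b = σ
      · subst hb
        show decodeAux b (h :: t) (if b = b then (!h) :: encodeAux b (h :: (t ++ [!h])) w
          else h :: encodeAux b t w) = b :: w
        rw [if_pos rfl]
        show (if (!h) = h then (!b) :: decodeAux b t (encodeAux b (h :: (t ++ [!h])) w)
          else b :: decodeAux b (h :: (t ++ [!h])) (encodeAux b (h :: (t ++ [!h])) w)) = b :: w
        rw [if_neg (by cases h <;> simp), ih]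
      · have hbs : b = !σ := by cases b <;> cases σ <;> simp_all
        show decodeAux σ (h :: t) (if b = σ then (!h) :: encodeAux σ (h :: (t ++ [!h])) w
          else h :: encodeAux σ t w) = b :: w
        rw [if_neg hb]
        show (if h = h then (!σ) :: decodeAux σ t (encodeAux σ t w)
          else σ :: decodeAux σ (h :: (t ++ [h])) (encodeAux σ t w)) = b :: w
        rw [if_pos rfl, ih, hbs]

lemma encode_length : ∀ (w : List Bool) (σ : Bool) (q : List Bool),
    (encodeAux σ q w).length = w.length := by
  intro w
  induction w with
  | nil => intro σ q; cases q <;> rfl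
  | cons b w ih =>
    intro σ q
    match q with
    | [] => simp [encodeAux, ih]
    | h :: t =>
      by_cases hb : b = σ
      · simp [encodeAux, if_pos hb, ih]
      · simp [encodeAux, if_neg hb, ih]

lemma encode_ilv : ∀ (w : List Bool) (σ : Bool) (q : List Bool),
    q.length + w.count σ = w.count (!σ) →
    ∃ u, Ilv (encodeAux σ q w) u (q ++ u) := by
  intro w
  induction w with
  | nil =>
    intro σ q h
    simp only [List.count_nil, Nat.add_zero] at h
    have : q = [] := List.length_eq_zero_iff.mp h
    subst this
    exact ⟨[], Ilv.nil⟩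
  | cons b w ih =>
    intro σ q h
    match q with
    | [] =>
      have hcond : [b].length + w.count b = w.count (!b) := by
        simp only [List.length_singleton]
        cases b <;> cases σ <;>
          simp_all [List.count_cons] <;> omega
      obtain ⟨u, hu⟩ := ih b [b] hcond
      refine ⟨b :: u, ?_⟩
      show Ilv (encodeAux σ [] (b :: w)) (b :: u) (b :: u)
      have : encodeAux σ [] (b :: w) = b :: encodeAux b [b] w := rfl
      rw [this]
      exact Ilv.left b hu
    | h1 :: t =>
      by_cases hb : b = σ
      · subst hb
        have hcond : (h1 :: (t ++ [!h1])).length + w.count b = w.count (!b) := by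
          simp only [List.count_cons, beq_self_eq_true, if_pos] at h
          simp only [List.length_cons, List.length_append, List.length_singleton] at h ⊢
          cases b <;> simp_all [List.count_cons] <;> omega
        obtain ⟨u, hu⟩ := ih b (h1 :: (t ++ [!h1])) hcond
        refine ⟨(!h1) :: u, ?_⟩
        have heq : encodeAux b (h1 :: t) (b :: w) = (!h1) :: encodeAux b (h1 :: (t ++ [!h1])) w := by
          simp [encodeAux]
        rw [heq]
        have : (h1 :: t) ++ ((!h1) :: u) = h1 :: ((t ++ [!h1]) ++ u) := by simp
        rw [this]
        exact Ilv.left (!h1) (by simpa using hu)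
      · have hbs : b = !σ := by cases b <;> cases σ <;> simp_all
        have hcond : t.length + w.count σ = w.count (!σ) := by
          subst hbs
          cases σ <;> simp_all [List.count_cons] <;> omega
        obtain ⟨u, hu⟩ := ih σ t hcond
        refine ⟨u, ?_⟩
        have heq : encodeAux σ (h1 :: t) (b :: w) = h1 :: encodeAux σ t w := by
          simp [encodeAux, hb]
        rw [heq]
        have : (h1 :: t) ++ u = h1 :: (t ++ u) := rfl
        rw [this]
        exact Ilv.right h1 hu

/-- Words of a fixed length over a finite alphabet form a finite set. -/
lemma finite_length_eq (m : ℕ) : {l : List Bool | l.length = m}.Finite := by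
  induction m with
  | zero =>
    refine Set.Finite.subset (Set.finite_singleton ([] : List Bool)) ?_
    intro l hl
    simp only [Set.mem_setOf_eq, List.length_eq_zero_iff] at hl
    simp [hl]
  | succ m ih =>
    refine Set.Finite.subset (Set.Finite.image2 List.cons Set.finite_univ ih) ?_
    intro l hl
    simp only [Set.mem_setOf_eq] at hl
    match l, hl with
    | x :: l', hl => exact Set.mem_image2_of_mem (Set.mem_univ x) (by simpa using hl)

lemma count_true_add_count_false (w : List Bool) :
    w.count true + w.count false = w.length := by
  induction w with
  | nil => rfl
  | cons b w ih => cases b <;> simp [List.count_cons] <;> omega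

lemma count_ofFn_decide (m : ℕ) (A : Finset (Fin m)) :
    (List.ofFn (fun i => decide (i ∈ A))).count true = A.card := by
  rw [List.ofFn_eq_map, List.count_eq_countP, List.countP_map]
  have h1 : (List.finRange m).countP ((fun x => x == true) ∘ fun i => decide (i ∈ A))
      = (List.finRange m).countP (fun i => decide (i ∈ A)) := by
    apply List.countP_congr; intro x _; simp
  rw [h1, List.countP_eq_length_filter]
  have hnd : ((List.finRange m).filter (fun i => decide (i ∈ A))).Nodup :=
    (List.nodup_finRange m).filter _
  rw [← List.toFinset_card_of_nodup hnd]
  congr 1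
  ext i
  simp [List.mem_filter, List.mem_finRange]

/-- the number of binary shuffle squares of semi-length `n`
is at least `C(2n, n)`. -/
theorem card_shuffleSquares_ge (n : ℕ) :
    Nat.choose (2 * n) n ≤ {s : List Bool | s.length = 2 * n ∧ IsShuffleSquare s}.ncard := by
  classical
  set S := {s : List Bool | s.length = 2 * n ∧ IsShuffleSquare s} with hS
  have hfin : S.Finite := (finite_length_eq (2 * n)).subset (fun s hs => hs.1)
  set g : Finset (Fin (2 * n)) → List Bool :=
    fun A => encodeAux true [] (List.ofFn (fun i => decide (i ∈ A))) with hg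
  have hginj : Function.Injective g := by
    intro A B hAB
    have h1 : List.ofFn (fun i => decide (i ∈ A)) = List.ofFn (fun i => decide (i ∈ B)) := by
      have h2 := congrArg (decodeAux true []) hAB
      rwa [decode_encode, decode_encode] at h2
    have h2 : (fun i => decide (i ∈ A)) = (fun i : Fin (2 * n) => decide (i ∈ B)) :=
      List.ofFn_injective h1
    ext i
    have h3 := congrFun h2 i
    simpa using h3
  set T : Finset (List Bool) := (Finset.powersetCard n (Finset.univ : Finset (Fin (2 * n)))).image g
    with hT
  have hTcard : T.card = Nat.choose (2 * n) n := by
    rw [hT, Finset.card_image_of_injective _ hginj, Finset.card_powersetCard, Finset.card_univ,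
      Fintype.card_fin]
  have hsub : (↑T : Set (List Bool)) ⊆ S := by
    intro s hs
    simp only [hT, Finset.coe_image, Set.mem_image, Finset.mem_coe,
      Finset.mem_powersetCard] at hs
    obtain ⟨A, ⟨-, hAcard⟩, rfl⟩ := hs
    set w := List.ofFn (fun i : Fin (2 * n) => decide (i ∈ A)) with hw
    have hlen : w.length = 2 * n := by simp [hw]
    have hct : w.count true = n := by rw [hw, count_ofFn_decide, hAcard]
    have hcf : w.count false = n := by
      have h4 := count_true_add_count_false w
      omega
    constructor
    · show (encodeAux true [] w).length = 2 * n
      rw [encode_length]; exact hlen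
    · show IsShuffleSquare (encodeAux true [] w)
      obtain ⟨u, hu⟩ := encode_ilv w true [] (by simp [hct, hcf])
      exact isShuffleSquare_of_ilv (by simpa using hu)
  calc Nat.choose (2 * n) n = T.card := hTcard.symm
    _ = (↑T : Set (List Bool)).ncard := (Set.ncard_coe_finset T).symm
    _ ≤ S.ncard := Set.ncard_le_ncard hsub hfin
end

section
/- Suppose s ∈ {0,1}^{2n} has an even number of 0's and an even number of 1's, t* ∈ [2n] is odd, and there exist j_1 ∈ {0,1} with j_1 ∈ B_{t*}(s) and j_2 ∈ {0,1} with j_2 ∈ B_{2n−t*}(rev(s)). Then j_1 = j_2 and s is a shuffle square. -/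
/-- Recursive characterization of `subAt`. -/
def subAtAux {α : Type*} : List α → (ℕ → Bool) → List α
  | [], _ => []
  | a :: l, c => (if c 0 then [a] else []) ++ subAtAux l (fun i => c (i + 1))

lemma subAt_enumFrom {α : Type*} (l : List α) : ∀ (n : ℕ) (c : ℕ → Bool),
    ((l.zipIdx n).filter (fun p => c p.2)).map Prod.fst = subAtAux l (fun i => c (i + n)) := by
  induction l with
  | nil => intro n c; simp [subAtAux]
  | cons a l ih =>
    intro n c
    simp only [List.zipIdx_cons, List.filter_cons, subAtAux]
    have h1 : (fun i => c (i + 1 + n)) = (fun i => c (i + (n + 1))) := by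
      funext i; congr 1; omega
    have h2 : (0 : ℕ) + n = n := by omega
    by_cases h : c n <;> simp [h, h2, h1, ih (n+1)]

lemma subAt_eq {α : Type*} (l : List α) (c : ℕ → Bool) : subAt l c = subAtAux l c := by
  unfold subAt
  rw [subAt_enumFrom]
  simp

lemma subAtAux_congr {α : Type*} : ∀ (l : List α) (c c' : ℕ → Bool),
    (∀ i < l.length, c i = c' i) → subAtAux l c = subAtAux l c' := by
  intro l
  induction l with
  | nil => intro c c' _; rfl
  | cons a l ih =>
    intro c c' h
    simp only [subAtAux]
    rw [h 0 (by simp), ih _ _ (fun i hi => h (i+1) (by simpa using Nat.succ_lt_succ hi))]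

lemma subAtAux_append {α : Type*} : ∀ (a b : List α) (c : ℕ → Bool),
    subAtAux (a ++ b) c = subAtAux a c ++ subAtAux b (fun i => c (i + a.length)) := by
  intro a
  induction a with
  | nil => intro b c; simp [subAtAux]
  | cons x a ih =>
    intro b c
    simp only [List.cons_append, subAtAux, List.length_cons, List.append_eq, ih,
      List.append_assoc]
    rfl

lemma subAtAux_reverse {α : Type*} : ∀ (l : List α) (c : ℕ → Bool),
    subAtAux l.reverse c = (subAtAux l (fun k => c (l.length - 1 - k))).reverse := by
  intro l
  induction l with
  | nil => intro c; rfl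
  | cons a l ih =>
    intro c
    rw [List.reverse_cons, subAtAux_append, ih]
    simp only [subAtAux, List.length_cons, List.length_reverse, List.reverse_append,
      List.reverse_cons]
    have h1 : (fun k => c (l.length + 1 - 1 - (k + 1))) = (fun k => c (l.length - 1 - k)) := by
      funext k; congr 1; omega
    simp only [h1, show l.length + 1 - 1 - 0 = l.length from by omega, Nat.zero_add]
    by_cases h : c l.length <;> simp [h, subAtAux]

lemma subAtAux_count {α : Type*} [DecidableEq α] (b : α) : ∀ (l : List α) (c : ℕ → Bool),
    (subAtAux l c).count b + (subAtAux l (fun i => !(c i))).count b = l.count b := by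
  intro l
  induction l with
  | nil => intro c; rfl
  | cons a l ih =>
    intro c
    have H := ih (fun i => c (i + 1))
    beta_reduce at H
    simp only [subAtAux]
    by_cases h : c 0 <;> by_cases hb : a = b <;>
      simp [h, hb, List.count_cons, List.count_append] <;> omega

/-- gluing two buffer certificates. If `s ∈ {0,1}^{2n}` has even
counts of both letters, `t* ∈ [2n]` is odd, `[j₁] ∈ B_{t*}(s)` and
`[j₂] ∈ B_{2n-t*}(rev(s))`, then `j₁ = j₂` and `s` is a shuffle square. -/
theorem glue_buffers (n : ℕ) (s : List Bool) (hlen : s.length = 2 * n)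
    (h0 : Even (s.count false)) (h1 : Even (s.count true))
    (t : ℕ) (ht1 : 1 ≤ t) (ht2 : t ≤ 2 * n) (htodd : Odd t)
    (j₁ j₂ : Bool) (hj₁ : [j₁] ∈ bufferSet s t)
    (hj₂ : [j₂] ∈ bufferSet s.reverse (2 * n - t)) :
    j₁ = j₂ ∧ IsShuffleSquare s := by
  obtain ⟨c₁, hc₁⟩ := hj₁
  obtain ⟨c₂, hc₂⟩ := hj₂
  rw [subAt_eq, subAt_eq] at hc₁ hc₂
  have hp : (s.take t).length = t := by
    rw [List.length_take]; omega
  have hd : (s.drop t).length = 2 * n - t := by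
    rw [List.length_drop]; omega
  have hrev : s.reverse.take (2 * n - t) = (s.drop t).reverse := by
    have h : s.reverse = (s.drop t).reverse ++ (s.take t).reverse := by
      rw [← List.reverse_append, List.take_append_drop]
    rw [h, show 2 * n - t = (s.drop t).reverse.length from by simp [hd],
      List.take_left]
  rw [hrev, subAtAux_reverse, subAtAux_reverse] at hc₂
  set g : ℕ → Bool := fun k => c₂ ((s.drop t).length - 1 - k) with hg
  have hcd : subAtAux (s.drop t) g = j₂ :: subAtAux (s.drop t) (fun k => !(g k)) := by
    have h := congrArg List.reverse hc₂
    simp only [List.reverse_append, List.reverse_reverse, List.reverse_singleton,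
      List.singleton_append] at h
    exact h
  -- parity facts
  have hpj : Odd ((s.take t).count j₁) := by
    have h := subAtAux_count j₁ (s.take t) c₁
    rw [hc₁] at h
    simp [List.count_append] at h
    exact ⟨(subAtAux (s.take t) fun i => !(c₁ i)).count j₁, by omega⟩
  have hpnj : Even ((s.take t).count (!j₁)) := by
    have h := subAtAux_count (!j₁) (s.take t) c₁
    rw [hc₁] at h
    have hne : j₁ ≠ !j₁ := by cases j₁ <;> simp
    simp [List.count_append, List.count_singleton', hne.symm] at h
    exact ⟨(subAtAux (s.take t) fun i => !(c₁ i)).count (!j₁), by omega⟩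
  have hdj : Odd ((s.drop t).count j₂) := by
    have h := subAtAux_count j₂ (s.drop t) g
    rw [hcd] at h
    simp [List.count_cons] at h
    exact ⟨(subAtAux (s.drop t) fun k => !(g k)).count j₂, by omega⟩
  have hdnj : Even ((s.drop t).count (!j₂)) := by
    have h := subAtAux_count (!j₂) (s.drop t) g
    rw [hcd] at h
    have hne : j₂ ≠ !j₂ := by cases j₂ <;> simp
    simp [List.count_cons, hne.symm] at h
    exact ⟨(subAtAux (s.drop t) fun k => !(g k)).count (!j₂), by omega⟩
  have hsplit : ∀ b : Bool, s.count b = (s.take t).count b + (s.drop t).count b := by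
    intro b
    conv_lhs => rw [← List.take_append_drop t s]
    rw [List.count_append]
  have heven : Even (s.count j₁) := by cases j₁ <;> assumption
  have hjj : j₁ = j₂ := by
    by_contra hne
    have hj : j₁ = !j₂ := by cases j₁ <;> cases j₂ <;> simp_all
    rw [hsplit j₁] at heven
    obtain ⟨x, hx⟩ := hpj
    rw [hj] at heven
    obtain ⟨y, hy⟩ := hdnj
    obtain ⟨z, hz⟩ := heven
    rw [hj] at hx
    omega
  refine ⟨hjj, ?_⟩
  refine ⟨fun i => if i < t then c₁ i else !(g (i - t)), ?_⟩
  rw [subAt_eq, subAt_eq, List.append_nil]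
  conv_lhs => rw [← List.take_append_drop t s]
  conv_rhs => rw [← List.take_append_drop t s]
  rw [subAtAux_append, subAtAux_append, hp]
  have e1 : subAtAux (s.take t) (fun i => if i < t then c₁ i else !(g (i - t)))
      = subAtAux (s.take t) c₁ := by
    apply subAtAux_congr
    intro i hi
    rw [hp] at hi
    simp [hi]
  have e2 : subAtAux (s.drop t) (fun i => if i + t < t then c₁ (i + t) else !(g (i + t - t)))
      = subAtAux (s.drop t) (fun k => !(g k)) := by
    apply subAtAux_congr
    intro i _
    simp only [show ¬(i + t < t) from by omega, if_false, Nat.add_sub_cancel]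
  have e3 : subAtAux (s.take t) (fun i => !(if i < t then c₁ i else !(g (i - t))))
      = subAtAux (s.take t) (fun i => !(c₁ i)) := by
    apply subAtAux_congr
    intro i hi
    rw [hp] at hi
    simp [hi]
  have e4 : subAtAux (s.drop t) (fun i => !(if i + t < t then c₁ (i + t) else !(g (i + t - t))))
      = subAtAux (s.drop t) g := by
    apply subAtAux_congr
    intro i _
    simp only [show ¬(i + t < t) from by omega, if_false, Nat.add_sub_cancel, Bool.not_not]
  rw [e1, e2, e3, e4, hc₁, hcd, ← hjj]
  simp
end
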